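/- The 2-domination number of the cylinder C_n □ P₂ equals n for every n ≥ 3. -/

import Mathlib

open SimpleGraph

/-- `S` is a 2-dominating set of `G`: every vertex not in `S` has at least two neighbors in `S`. -/
def TwoDomSet {V : Type*} (G : SimpleGraph V) (S : Set V) : Prop :=
  ∀ v ∉ S, 2 ≤ (S ∩ G.neighborSet v).ncard

/-- The 2-domination number of `G`. -/
noncomputable def gamma2 {V : Type*} (G : SimpleGraph V) : ℕ :=
  sInf {k | ∃ S : Set V, TwoDomSet G S ∧ S.ncard = k}

/-- The cylinder `C_n □ P_m`. -/
def cylinder (n m : ℕ) : SimpleGraph (Fin n × Fin m) :=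
  (cycleGraph n) □ (pathGraph m)

section Aux
variable {n : ℕ} [NeZero n] (hn : 3 ≤ n)

include hn

lemma Gamma2Prism.val_add_one' (i : Fin n) : ((i + 1) : Fin n).val = (i.val + 1) % n := by
  rw [Fin.add_def, Fin.val_one', Nat.mod_eq_of_lt (show 1 < n by omega)]

lemma Gamma2Prism.val_sub_one_last (i : Fin n) (h : i.val = n - 1) :
    ((i - 1) : Fin n).val = n - 2 := by
  simp only [Fin.sub_def, Fin.val_one', Nat.mod_eq_of_lt (show 1 < n by omega), h]
  have : n - 1 + (n - 1) = (n - 2) + n := by omega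
  rw [this, Nat.add_mod_right, Nat.mod_eq_of_lt (by omega)]

lemma Gamma2Prism.adj_succ (i : Fin n) : (cycleGraph n).Adj i (i + 1) := by
  rw [cycleGraph_adj']
  right
  rw [add_sub_cancel_left, Fin.val_one', Nat.mod_eq_of_lt (show 1 < n by omega)]

lemma Gamma2Prism.adj_pred (i : Fin n) : (cycleGraph n).Adj i (i - 1) := by
  rw [cycleGraph_adj']
  left
  rw [sub_sub_cancel, Fin.val_one', Nat.mod_eq_of_lt (show 1 < n by omega)]

end Aux

/-- The parity function used to build an optimal 2-dominating set. -/
def Gamma2Prism.par {n : ℕ} (i : Fin n) : Fin 2 := ⟨i.val % 2, Nat.mod_lt _ (by omega)⟩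

open Gamma2Prism in
/-- Upper bound: a 2-dominating set of size `n` exists. -/
lemma Gamma2Prism.upper (n : ℕ) (hn : 3 ≤ n) :
    ∃ S : Set (Fin n × Fin 2), TwoDomSet (cylinder n 2) S ∧ S.ncard = n := by
  haveI : NeZero n := ⟨by omega⟩
  set f : Fin n → Fin n × Fin 2 := fun i => (i, par i) with hf
  have hinj : Function.Injective f := fun a b h => congrArg Prod.fst h
  refine ⟨Set.range f, ?_, ?_⟩
  · rintro ⟨i, j⟩ hv
    have hj : j ≠ par i := by
      intro h; exact hv ⟨i, by rw [hf, h]⟩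
    have hj2 : j.val ≠ i.val % 2 := fun h => hj (Fin.ext h)
    have hjlt : j.val < 2 := j.2
    have hvert : f i ∈ Set.range f ∩ (cylinder n 2).neighborSet (i, j) := by
      refine ⟨⟨i, rfl⟩, ?_⟩
      show (cylinder n 2).Adj (i, j) (i, par i)
      rw [cylinder, boxProd_adj]
      right
      refine ⟨?_, rfl⟩
      rw [pathGraph_adj]
      show j.val + 1 = (par i).val ∨ (par i).val + 1 = j.val
      have : (par i).val = i.val % 2 := rfl
      omega
    obtain ⟨i', hadj, hpar⟩ : ∃ i' : Fin n, (cycleGraph n).Adj i i' ∧ (par i').val = j.val := by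
      rcases Nat.lt_or_ge (i.val + 1) n with h | h
      · refine ⟨i + 1, adj_succ hn i, ?_⟩
        show (i + 1).val % 2 = j.val
        rw [val_add_one' hn, Nat.mod_eq_of_lt h]
        omega
      · have hlast : i.val = n - 1 := by
          have := i.2; omega
        refine ⟨i - 1, adj_pred hn i, ?_⟩
        show (i - 1).val % 2 = j.val
        rw [val_sub_one_last hn i hlast]
        have := i.2
        omega
    have hhor : f i' ∈ Set.range f ∩ (cylinder n 2).neighborSet (i, j) := by
      refine ⟨⟨i', rfl⟩, ?_⟩
      show (cylinder n 2).Adj (i, j) (i', par i')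
      rw [cylinder, boxProd_adj]
      left
      exact ⟨hadj, (Fin.ext hpar.symm : j = par i')⟩
    have hne : f i ≠ f i' := fun h => hadj.ne (congrArg Prod.fst h)
    exact (Set.one_lt_ncard (Set.toFinite _)).2 ⟨f i, hvert, f i', hhor, hne⟩
  · rw [← Set.image_univ, Set.ncard_image_of_injective _ hinj, Set.ncard_univ]
    simp

/-- If a column is empty, both neighboring columns are full. -/
lemma Gamma2Prism.colEmpty {n : ℕ} [NeZero n] (hn : 3 ≤ n) {S : Set (Fin n × Fin 2)}
    (hS : TwoDomSet (cylinder n 2) S) (i : Fin n) (hempty : ∀ k, (i, k) ∉ S)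
    (j : Fin 2) : (i - 1, j) ∈ S ∧ (i + 1, j) ∈ S := by
  have h2 := hS (i, j) (hempty j)
  have h1n : (1 : Fin n).val = 1 := by
    rw [Fin.val_one']; exact Nat.mod_eq_of_lt (by omega)
  have hsub : S ∩ (cylinder n 2).neighborSet (i, j) ⊆ {(i - 1, j), (i + 1, j)} := by
    rintro ⟨a, b⟩ ⟨haS, hadj⟩
    have hadj' : (cylinder n 2).Adj (i, j) (a, b) := hadj
    rw [cylinder, boxProd_adj] at hadj'
    rcases hadj' with ⟨hc, hb⟩ | ⟨_, ha⟩
    · replace hb : j = b := hb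
      rw [cycleGraph_adj'] at hc
      rcases hc with hc | hc
      · left
        have hia : i - a = 1 := Fin.ext (by rw [h1n]; exact hc)
        have h3 : a = i - 1 := by rw [← hia, sub_sub_cancel]
        rw [h3, ← hb]
      · right
        have hia : a - i = 1 := Fin.ext (by rw [h1n]; exact hc)
        have h3 : a = i + 1 := by
          have h4 : a - (a - i) = a - 1 := by rw [hia]
          rw [sub_sub_cancel] at h4
          rw [h4, sub_add_cancel]
        rw [h3, ← hb]
        rfl
    · exact absurd (show (i, b) ∈ S by rwa [show a = i from ha.symm] at haS) (hempty b)
  have hne : ((i - 1 : Fin n), j) ≠ (i + 1, j) := by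
    intro h
    have h1 : (i - 1 : Fin n) = i + 1 := congrArg Prod.fst h
    have h2' : (2 : Fin n) = 0 := by
      have h5 : i + 1 - (i - 1) = 2 := by open Fin.CommRing in ring
      rw [← h5, ← h1, sub_self]
    have h6 : ((2 : Fin n)).val = 2 := by
      show (2 : ℕ) % n = 2
      exact Nat.mod_eq_of_lt (by omega)
    rw [h2'] at h6
    simp at h6
  have heq := Set.eq_of_subset_of_ncard_le hsub
    (by rw [Set.ncard_pair hne]; exact h2) (Set.toFinite _)
  constructor
  · have h7 : ((i - 1 : Fin n), j) ∈ S ∩ (cylinder n 2).neighborSet (i, j) := by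
      rw [heq]; exact Set.mem_insert _ _
    exact h7.1
  · have h7 : ((i + 1 : Fin n), j) ∈ S ∩ (cylinder n 2).neighborSet (i, j) := by
      rw [heq]; exact Set.mem_insert_of_mem _ rfl
    exact h7.1

/-- Lower bound: every 2-dominating set has at least `n` elements. -/
lemma Gamma2Prism.lower (n : ℕ) (hn : 3 ≤ n) (S : Set (Fin n × Fin 2))
    (hS : TwoDomSet (cylinder n 2) S) : n ≤ S.ncard := by
  haveI : NeZero n := ⟨by omega⟩
  classical
  have hfin : S.Finite := Set.toFinite S
  set T := hfin.toFinset with hT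
  set s : Fin n → ℕ := fun i => (T.filter (fun a => a.1 = i)).card with hs
  have hmem : ∀ (i : Fin n) (j : Fin 2), (i, j) ∈ S → (i, j) ∈ T.filter (fun a => a.1 = i) :=
    fun i j h => Finset.mem_filter.2 ⟨hfin.mem_toFinset.2 h, rfl⟩
  have hcol2 : ∀ i : Fin n, (i, 0) ∈ S → (i, 1) ∈ S → 2 ≤ s i := by
    intro i h0 h1
    exact Finset.one_lt_card.2 ⟨(i, 0), hmem i 0 h0, (i, 1), hmem i 1 h1,
      fun h => by simp at h⟩
  have hedge : ∀ i : Fin n, 2 ≤ s i + s (i + 1) := by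
    intro i
    by_cases hA : ∀ k, (i, k) ∉ S
    · have h0 := (colEmpty hn hS i hA 0).2
      have h1 := (colEmpty hn hS i hA 1).2
      exact le_add_self.trans (Nat.add_le_add_left (hcol2 _ h0 h1) _)
    · by_cases hB : ∀ k, (i + 1, k) ∉ S
      · have h0 := (colEmpty hn hS (i + 1) hB 0).1
        have h1 := (colEmpty hn hS (i + 1) hB 1).1
        rw [add_sub_cancel_right] at h0 h1
        exact le_add_right (hcol2 _ h0 h1)
      · push_neg at hA hB
        obtain ⟨k, hk⟩ := hA
        obtain ⟨k', hk'⟩ := hB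
        have c1 : 1 ≤ s i := Finset.card_pos.2 ⟨(i, k), hmem i k hk⟩
        have c2 : 1 ≤ s (i + 1) := Finset.card_pos.2 ⟨(i + 1, k'), hmem _ k' hk'⟩
        omega
  have hsum : T.card = ∑ i : Fin n, s i :=
    Finset.card_eq_sum_card_fiberwise (f := Prod.fst) (fun x _ => Finset.mem_univ _)
  have hshift : ∑ i : Fin n, s (i + 1) = ∑ i : Fin n, s i :=
    Fintype.sum_equiv (Equiv.addRight (1 : Fin n)) _ _ (fun x => rfl)
  have h2n : 2 * n ≤ 2 * ∑ i : Fin n, s i := by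
    calc 2 * n = ∑ _i : Fin n, 2 := by simp [mul_comm]
    _ ≤ ∑ i : Fin n, (s i + s (i + 1)) := Finset.sum_le_sum (fun i _ => hedge i)
    _ = ∑ i : Fin n, s i + ∑ i : Fin n, s (i + 1) := Finset.sum_add_distrib
    _ = 2 * ∑ i : Fin n, s i := by rw [hshift]; ring
  rw [Set.ncard_eq_toFinset_card S hfin, ← hT, hsum]
  omega

theorem gamma2_prism (n : ℕ) (hn : 3 ≤ n) : gamma2 (cylinder n 2) = n := by
  obtain ⟨S, hdom, hcard⟩ := Gamma2Prism.upper n hn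
  have hmem : n ∈ {k | ∃ S : Set (Fin n × Fin 2), TwoDomSet (cylinder n 2) S ∧ S.ncard = k} :=
    ⟨S, hdom, hcard⟩
  refine le_antisymm (Nat.sInf_le hmem) (le_csInf ⟨n, hmem⟩ ?_)
  rintro k ⟨S', hd, hc⟩
  rw [← hc]
  exact Gamma2Prism.lower n hn S' hd
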